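/- Let n ≥ 2 and let X ⊆ K = {0,…,n−1}^ω be a set that cannot be covered by countably many closed λ-null sets, where λ is the uniform product measure. For x ∈ K and i < n let Bᵢ(x) = {σ ∈ n^{<ω} : σ⌢i is an initial segment of x}. Then the family 𝒜 = {Bᵢ(x) : x ∈ X, i < n, Bᵢ(x) infinite} is an almost disjoint family of subsets of the countable tree n^{<ω}, and the subfamilies 𝒜ᵢ = {Bᵢ(x) : x ∈ X, Bᵢ(x) infinite} (i < n) are pairwise disjoint and not separated. -/

import Mathlib

open MeasureTheory

def Bset {n : ℕ} (i : Fin n) (x : ℕ → Fin n) : Set (List (Fin n)) :=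
  {σ : List (Fin n) | (∀ j : Fin σ.length, σ.get j = x j) ∧ x σ.length = i}

def seg {n : ℕ} (x : ℕ → Fin n) (m : ℕ) : List (Fin n) := List.ofFn (fun j : Fin m => x j)

@[simp] lemma seg_length {n : ℕ} (x : ℕ → Fin n) (m : ℕ) : (seg x m).length = m :=
  List.length_ofFn

lemma eq_seg_of_mem_Bset {n : ℕ} {i : Fin n} {x : ℕ → Fin n} {σ : List (Fin n)}
    (h : σ ∈ Bset i x) : σ = seg x σ.length := by
  refine List.ext_get (by simp) (fun k h1 h2 => ?_)
  rw [h.1 ⟨k, h1⟩]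
  simp [seg, List.get_ofFn]

lemma seg_mem_Bset {n : ℕ} {i : Fin n} {x : ℕ → Fin n} {m : ℕ} (h : x m = i) :
    seg x m ∈ Bset i x := by
  refine ⟨fun j => ?_, ?_⟩
  · rw [List.get_eq_getElem]; simp [seg]
  · simpa using h

lemma Bset_almost_disjoint {n : ℕ} {x y : ℕ → Fin n} {i j : Fin n} (hxy : x ≠ y) :
    (Bset i x ∩ Bset j y).Finite := by
  obtain ⟨k, hk⟩ := Function.ne_iff.mp hxy
  apply Set.Finite.subset ((Set.finite_Iic k).image (seg x))
  rintro σ ⟨hσx, hσy⟩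
  refine ⟨σ.length, ?_, (eq_seg_of_mem_Bset hσx).symm⟩
  simp only [Set.mem_Iic]
  by_contra h
  push_neg at h
  exact hk ((hσx.1 ⟨k, h⟩).symm.trans (hσy.1 ⟨k, h⟩))

lemma Bset_ne_empty_inter {n : ℕ} {x : ℕ → Fin n} {i j : Fin n} (hij : i ≠ j) :
    Bset i x ∩ Bset j x = ∅ := by
  rw [Set.eq_empty_iff_forall_notMem]
  rintro σ ⟨h1, h2⟩
  exact hij (h1.2.symm.trans h2.2)

lemma finite_bound {n : ℕ} {F : Set (List (Fin n))} (h : F.Finite) :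
    ∃ N, ∀ σ ∈ F, σ.length < N := by
  obtain ⟨N, hN⟩ := (h.image List.length).bddAbove
  exact ⟨N + 1, fun σ hσ => Nat.lt_succ_of_le (hN ⟨σ, hσ, rfl⟩)⟩

lemma isClosed_cyl {n k : ℕ} (τ : Fin k → Fin n) :
    IsClosed {x : ℕ → Fin n | ∀ j : Fin k, x j = τ j} := by
  have : {x : ℕ → Fin n | ∀ j : Fin k, x j = τ j}
      = ⋂ j : Fin k, (fun x : ℕ → Fin n => x (j : ℕ)) ⁻¹' {τ j} := by
    ext x; simp [Set.mem_iInter]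
  rw [this]
  exact isClosed_iInter fun j => (isClosed_discrete _).preimage (continuous_apply _)

lemma isClosed_level {n : ℕ} (S : Fin n → Set (List (Fin n))) (m : ℕ) :
    IsClosed {x : ℕ → Fin n | seg x m ∈ S (x m)} := by
  have : {x : ℕ → Fin n | seg x m ∈ S (x m)}
      = ⋃ τ ∈ {τ : Fin (m+1) → Fin n |
          List.ofFn (fun j : Fin m => τ ⟨j, lt_trans j.isLt (Nat.lt_succ_self m)⟩)
            ∈ S (τ (Fin.last m))},
        {x : ℕ → Fin n | ∀ j : Fin (m+1), x j = τ j} := by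
    ext x
    simp only [Set.mem_setOf_eq, Set.mem_iUnion]
    constructor
    · intro hx
      exact ⟨fun j => x j, hx, fun j => rfl⟩
    · rintro ⟨τ, hτ, hcy⟩
      have h1 : seg x m = List.ofFn (fun j : Fin m => τ ⟨j, lt_trans j.isLt (Nat.lt_succ_self m)⟩) := by
        refine congrArg List.ofFn (funext fun j => ?_)
        exact hcy ⟨j, lt_trans j.isLt (Nat.lt_succ_self m)⟩
      have h2 : x m = τ (Fin.last m) := hcy (Fin.last m)
      rw [h1, h2]; exact hτ
  rw [this]
  exact Set.Finite.isClosed_biUnion (Set.toFinite _) (fun τ _ => isClosed_cyl τ)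

lemma isClosed_D {n : ℕ} (S : Fin n → Set (List (Fin n))) (N : ℕ) :
    IsClosed {x : ℕ → Fin n | ∀ m, N ≤ m → seg x m ∈ S (x m)} := by
  have : {x : ℕ → Fin n | ∀ m, N ≤ m → seg x m ∈ S (x m)}
      = ⋂ m, {x : ℕ → Fin n | N ≤ m → seg x m ∈ S (x m)} := by
    ext x; simp [Set.mem_iInter]
  rw [this]
  refine isClosed_iInter fun m => ?_
  by_cases h : N ≤ m
  · simpa only [h, true_implies] using isClosed_level S m
  · simp [h]

lemma D_null {n : ℕ} (hn : 2 ≤ n) (μ : Measure (ℕ → Fin n))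
    (hcyl : ∀ (k : ℕ) (σ : Fin k → Fin n),
      μ {y | ∀ j : Fin k, y j = σ j} = (1 / (n : ENNReal)) ^ k)
    (S : Fin n → Set (List (Fin n))) (hS : (⋂ i, S i) = ∅) (N : ℕ) :
    μ {x : ℕ → Fin n | ∀ m, N ≤ m → seg x m ∈ S (x m)} = 0 := by
  classical
  have hn0 : (n : ENNReal) ≠ 0 := Nat.cast_ne_zero.mpr (by omega)
  have hnt : (n : ENNReal) ≠ ⊤ := ENNReal.natCast_ne_top n
  -- choose forbidden digit
  have hφ : ∀ σ : List (Fin n), ∃ i, σ ∉ S i := by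
    intro σ
    by_contra h
    push_neg at h
    have : σ ∈ ⋂ i, S i := Set.mem_iInter.mpr h
    simp [hS] at this
  choose φ hφ using hφ
  set D := {x : ℕ → Fin n | ∀ m, N ≤ m → seg x m ∈ S (x m)} with hD
  -- Good prefixes
  let G : (t : ℕ) → Finset (Fin (N + t) → Fin n) := fun t =>
    Finset.univ.filter (fun τ => ∀ m : Fin (N + t), N ≤ (m : ℕ) →
      τ m ≠ φ (List.ofFn (fun j : Fin (m : ℕ) => τ ⟨j, lt_trans j.isLt m.isLt⟩)))
  -- card recursion
  have hGcard : ∀ t, (G (t + 1)).card ≤ (n - 1) * (G t).card := by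
    intro t
    set f : (Fin (N + t + 1) → Fin n) → (Fin (N + t) → Fin n) :=
      fun τ => τ ∘ Fin.castSucc with hf
    have himage : (G (t + 1)).image f ⊆ G t := by
      intro ρ hρ
      simp only [Finset.mem_image] at hρ
      obtain ⟨τ, hτ, rfl⟩ := hρ
      simp only [G, Finset.mem_filter, Finset.mem_univ, true_and] at hτ ⊢
      intro m hm
      exact hτ m.castSucc hm
    have hfiber : ∀ ρ ∈ (G (t + 1)).image f,
        ((G (t + 1)).filter (fun τ => f τ = ρ)).card ≤ n - 1 := by
      intro ρ _
      have : ((G (t + 1)).filter (fun τ => f τ = ρ)).card ≤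
          (Finset.univ.erase (φ (List.ofFn ρ))).card := by
        refine Finset.card_le_card_of_injOn (fun τ => τ (Fin.last (N + t))) ?_ ?_
        · intro τ hτ
          simp only [Finset.mem_coe, Finset.mem_filter] at hτ
          obtain ⟨hτG, hτρ⟩ := hτ
          simp only [G, Finset.mem_filter, Finset.mem_univ, true_and] at hτG
          refine Finset.mem_erase.mpr ⟨?_, Finset.mem_univ _⟩
          have h1 := hτG (Fin.last (N + t)) (by simp [Fin.last])
          have h2 : List.ofFn (fun j : Fin ((Fin.last (N + t) : ℕ)) =>
              τ ⟨j, lt_trans j.isLt (Fin.last (N + t)).isLt⟩) = List.ofFn ρ := by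
            exact congrArg List.ofFn hτρ
          rw [h2] at h1
          exact h1
        · intro τ₁ h₁ τ₂ h₂ hlast
          simp only [Finset.coe_filter, Set.mem_setOf_eq] at h₁ h₂
          funext j
          refine Fin.lastCases hlast (fun j' => ?_) j
          have := congrFun (h₁.2.trans h₂.2.symm) j'
          exact this
      refine this.trans ?_
      rw [Finset.card_erase_of_mem (Finset.mem_univ _)]
      simp
    calc (G (t + 1)).card ≤ (n - 1) * ((G (t + 1)).image f).card :=
          Finset.card_le_mul_card_image _ _ hfiber
      _ ≤ (n - 1) * (G t).card := Nat.mul_le_mul_left _ (Finset.card_le_card himage)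
  have hGbound : ∀ t, (G t).card ≤ n ^ N * (n - 1) ^ t := by
    intro t
    induction t with
    | zero =>
      simpa [Fintype.card_fun] using (Finset.card_le_univ (G 0))
    | succ t ih =>
      calc (G (t + 1)).card ≤ (n - 1) * (G t).card := hGcard t
        _ ≤ (n - 1) * (n ^ N * (n - 1) ^ t) := Nat.mul_le_mul_left _ ih
        _ = n ^ N * (n - 1) ^ (t + 1) := by ring
  -- D covered by cylinders over G t
  have hcover : ∀ t, D ⊆ ⋃ τ ∈ G t, {x : ℕ → Fin n | ∀ j : Fin (N + t), x j = τ j} := by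
    intro t x hx
    refine Set.mem_iUnion₂.mpr ⟨fun j : Fin (N + t) => x j, ?_, fun j => rfl⟩
    simp only [G, Finset.mem_filter, Finset.mem_univ, true_and]
    intro m hm
    have hxm := hx (m : ℕ) hm
    intro hcontra
    exact hφ (seg x (m : ℕ)) (hcontra ▸ hxm)
  -- measure bound
  have hμ : ∀ t, μ D ≤ ((n ^ N * (n - 1) ^ t : ℕ) : ENNReal) * (1 / (n : ENNReal)) ^ (N + t) := by
    intro t
    calc μ D ≤ μ (⋃ τ ∈ G t, {x : ℕ → Fin n | ∀ j : Fin (N + t), x j = τ j}) :=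
          measure_mono (hcover t)
      _ ≤ ∑ τ ∈ G t, μ {x : ℕ → Fin n | ∀ j : Fin (N + t), x j = τ j} :=
          measure_biUnion_finset_le _ _
      _ = ∑ τ ∈ G t, (1 / (n : ENNReal)) ^ (N + t) := by
          refine Finset.sum_congr rfl fun τ _ => hcyl (N + t) τ
      _ = (G t).card * (1 / (n : ENNReal)) ^ (N + t) := by
          rw [Finset.sum_const, nsmul_eq_mul]
      _ ≤ ((n ^ N * (n - 1) ^ t : ℕ) : ENNReal) * (1 / (n : ENNReal)) ^ (N + t) := by
          gcongr
          exact_mod_cast hGbound t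
  -- arithmetic: RHS = c ^ t with c < 1
  set c : ENNReal := (↑(n - 1) : ENNReal) * (1 / (n : ENNReal)) with hc
  have harith : ∀ t, ((n ^ N * (n - 1) ^ t : ℕ) : ENNReal) * (1 / (n : ENNReal)) ^ (N + t) = c ^ t := by
    intro t
    have h1 : (n : ENNReal) ^ N * (1 / (n : ENNReal)) ^ N = 1 := by
      rw [← mul_pow, one_div, ENNReal.mul_inv_cancel hn0 hnt, one_pow]
    rw [hc, Nat.cast_mul, Nat.cast_pow, Nat.cast_pow, pow_add, mul_pow]
    calc (n:ENNReal) ^ N * ((n-1:ℕ):ENNReal)^t * ((1/(n:ENNReal))^N * (1/(n:ENNReal))^t)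
        = ((n:ENNReal) ^ N * (1/(n:ENNReal))^N) * (((n-1:ℕ):ENNReal)^t * (1/(n:ENNReal))^t) := by
          ring
      _ = ((n-1:ℕ):ENNReal)^t * (1/(n:ENNReal))^t := by rw [h1, one_mul]
  have hclt : c < 1 := by
    have h1 : ((n - 1 : ℕ) : ENNReal) < (n : ENNReal) := by
      exact_mod_cast Nat.sub_lt (by omega) one_pos
    have h2 : (n : ENNReal) * (1 / (n : ENNReal)) = 1 := by
      rw [one_div, ENNReal.mul_inv_cancel hn0 hnt]
    calc c < (n : ENNReal) * (1 / (n : ENNReal)) := by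
          rw [hc]
          exact (ENNReal.mul_lt_mul_iff_left (by simp [hn0]) (by simp [hn0, hnt])).mpr h1
      _ = 1 := h2
  have htend := ENNReal.tendsto_pow_atTop_nhds_zero_of_lt_one hclt
  have : μ D ≤ 0 := ge_of_tendsto' htend (fun t => (hμ t).trans_eq (harith t))
  exact le_antisymm this zero_le


/-- Let `n ≥ 2`, let `λ` be the uniform product measure on `K = n^ω`
(characterized by its values on cylinders), and let `X ⊆ K` be a set not coverable by
countably many closed `λ`-null sets. Then `𝒜 = {Bᵢ(x) : x ∈ X, i < n, Bᵢ(x) infinite}` is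
an almost disjoint family of subsets of the countable tree `n^{<ω}`, and the subfamilies
`𝒜ᵢ = {Bᵢ(x) : x ∈ X, Bᵢ(x) infinite}` are pairwise disjoint and not separated. -/
theorem stmt19 (n : ℕ) (hn : 2 ≤ n)
    (μ : Measure (ℕ → Fin n))
    (hcyl : ∀ (k : ℕ) (σ : Fin k → Fin n),
      μ {y | ∀ j : Fin k, y j = σ j} = (1 / (n : ENNReal)) ^ k)
    (X : Set (ℕ → Fin n))
    (hX : ¬ ∃ C : ℕ → Set (ℕ → Fin n),
      (∀ m, IsClosed (C m) ∧ μ (C m) = 0) ∧ X ⊆ ⋃ m, C m)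
    (𝒜i : Fin n → Set (Set (List (Fin n))))
    (h𝒜i : ∀ i, 𝒜i i = {s | ∃ x ∈ X, s = Bset i x ∧ s.Infinite}) :
    (∀ A ∈ ⋃ i, 𝒜i i, A.Infinite) ∧
    (∀ A ∈ ⋃ i, 𝒜i i, ∀ B ∈ ⋃ i, 𝒜i i, A ≠ B → (A ∩ B).Finite) ∧
    Pairwise (Function.onFun Disjoint 𝒜i) ∧
    ¬ ∃ S : Fin n → Set (List (Fin n)), (⋂ i, S i) = ∅ ∧
      ∀ i, ∀ A ∈ 𝒜i i, (A \ S i).Finite := by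
  refine ⟨?_, ?_, ?_, ?_⟩
  · -- every member is infinite
    intro A hA
    obtain ⟨i, hi⟩ := Set.mem_iUnion.mp hA
    rw [h𝒜i] at hi
    obtain ⟨x, hx, rfl, hinf⟩ := hi
    exact hinf
  · -- almost disjoint
    intro A hA B hB hne
    obtain ⟨i, hi⟩ := Set.mem_iUnion.mp hA
    obtain ⟨j, hj⟩ := Set.mem_iUnion.mp hB
    rw [h𝒜i] at hi hj
    obtain ⟨x, hx, rfl, hinfx⟩ := hi
    obtain ⟨y, hy, rfl, hinfy⟩ := hj
    by_cases hxy : x = y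
    · subst hxy
      have hij : i ≠ j := fun h => hne (by rw [h])
      rw [Bset_ne_empty_inter hij]
      exact Set.finite_empty
    · exact Bset_almost_disjoint hxy
  · -- pairwise disjoint subfamilies
    intro i j hij
    rw [Function.onFun, Set.disjoint_left]
    intro s hsi hsj
    rw [h𝒜i] at hsi hsj
    obtain ⟨x, hx, hsx, hinf⟩ := hsi
    obtain ⟨y, hy, hsy, _⟩ := hsj
    by_cases hxy : x = y
    · subst hxy
      refine hinf (Set.Finite.subset (Set.finite_empty) ?_)
      rw [← Bset_ne_empty_inter hij]
      intro σ hσ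
      exact ⟨hsx ▸ hσ, hsy ▸ hσ⟩
    · refine hinf (Set.Finite.subset (Bset_almost_disjoint (i := i) (j := j) hxy) ?_)
      intro σ hσ
      exact ⟨hsx ▸ hσ, hsy ▸ hσ⟩
  · -- not separated
    rintro ⟨S, hSempty, hSsep⟩
    apply hX
    refine ⟨fun N => {x : ℕ → Fin n | ∀ m, N ≤ m → seg x m ∈ S (x m)},
      fun N => ⟨isClosed_D S N, D_null hn μ hcyl S hSempty N⟩, ?_⟩
    intro x hx
    have hN : ∀ i : Fin n, ∃ Ni, ∀ m, Ni ≤ m → x m = i → seg x m ∈ S i := by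
      intro i
      by_cases hinf : (Bset i x).Infinite
      · have hfin := hSsep i (Bset i x) (by rw [h𝒜i]; exact ⟨x, hx, rfl, hinf⟩)
        obtain ⟨Ni, hNi⟩ := finite_bound hfin
        refine ⟨Ni, fun m hm hxm => ?_⟩
        by_contra h
        have := hNi (seg x m) ⟨seg_mem_Bset hxm, h⟩
        rw [seg_length] at this
        omega
      · rw [Set.not_infinite] at hinf
        obtain ⟨Ni, hNi⟩ := finite_bound hinf
        refine ⟨Ni, fun m hm hxm => ?_⟩
        have := hNi (seg x m) (seg_mem_Bset hxm)
        rw [seg_length] at this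
        omega
    choose Nf hNf using hN
    refine Set.mem_iUnion.mpr ⟨Finset.univ.sup Nf, fun m hm => ?_⟩
    exact hNf (x m) m (le_trans (Finset.le_sup (Finset.mem_univ _)) hm) rfl
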